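/- Let (Y,d) be a metric space and let k : Y × Y → ℝ be a positive, symmetric, bounded kernel such that the family {k(·,y) : y ∈ Y} is uniformly equicontinuous on Y (for every ε > 0 there is δ > 0 such that |k(x,y) − k(x',y)| < ε for all y ∈ Y whenever d(x,x') < δ). Then the average interval equals the rendezvous interval and both are nonempty: q̲(Y,Y) = M(Y) ≤ M̄(Y) = q(Y,Y); that is, A(Y) = R(Y) ≠ ∅. -/

import Mathlib

open MeasureTheory ENNReal
open scoped BigOperators

namespace Rendezvous

variable {X : Type*}

/-- The `n`-th Chebyshev constant `Mₙ(H,L)` of `L` with respect to `H` for the kernel `k`. -/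
noncomputable def chebMn (k : X → X → ℝ≥0∞) (n : ℕ) (H L : Set X) : ℝ≥0∞ :=
  ⨆ w : Fin n → H, ⨅ x : L, (∑ j, k (x : X) ((w j : X))) / (n : ℝ≥0∞)

/-- The `n`-th dual Chebyshev constant `M̄ₙ(H,L)`. -/
noncomputable def chebMnDual (k : X → X → ℝ≥0∞) (n : ℕ) (H L : Set X) : ℝ≥0∞ :=
  ⨅ w : Fin n → H, ⨆ x : L, (∑ j, k (x : X) ((w j : X))) / (n : ℝ≥0∞)

/-- The Chebyshev constant `M(H,L) = sup_{n ≥ 1} Mₙ(H,L)`. -/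
noncomputable def chebM (k : X → X → ℝ≥0∞) (H L : Set X) : ℝ≥0∞ :=
  ⨆ n : ℕ, ⨆ (_ : 1 ≤ n), chebMn k n H L

/-- The dual Chebyshev constant `M̄(H,L) = inf_{n ≥ 1} M̄ₙ(H,L)`. -/
noncomputable def chebMDual (k : X → X → ℝ≥0∞) (H L : Set X) : ℝ≥0∞ :=
  ⨅ n : ℕ, ⨅ (_ : 1 ≤ n), chebMnDual k n H L

/-- The potential `U^μ(x) = ∫ k(x,y) dμ(y)` of a measure. -/
noncomputable def pot [MeasurableSpace X] (k : X → X → ℝ≥0∞) (μ : Measure X) (x : X) : ℝ≥0∞ :=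
  ∫⁻ y, k x y ∂μ

/-- `μ` is a tight (inner regular w.r.t. compact sets) Borel probability measure
concentrated on `H`. -/
def TightProbOn [TopologicalSpace X] [MeasurableSpace X] (μ : Measure X) (H : Set X) : Prop :=
  IsProbabilityMeasure μ ∧ μ.InnerRegular ∧ μ Hᶜ = 0

/-- The quasi-uniform energy `q(H,L) = inf_{μ ∈ M₁(H)} sup_{x ∈ L} U^μ(x)`. -/
noncomputable def qUp [TopologicalSpace X] [MeasurableSpace X] (k : X → X → ℝ≥0∞)
    (H L : Set X) : ℝ≥0∞ :=
  ⨅ (μ : Measure X) (_ : TightProbOn μ H), ⨆ x : L, pot k μ (x : X)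

/-- The dual quasi-uniform energy `q̲(H,L) = sup_{μ ∈ M₁(H)} inf_{x ∈ L} U^μ(x)`. -/
noncomputable def qLow [TopologicalSpace X] [MeasurableSpace X] (k : X → X → ℝ≥0∞)
    (H L : Set X) : ℝ≥0∞ :=
  ⨆ (μ : Measure X) (_ : TightProbOn μ H), ⨅ x : L, pot k μ (x : X)

end Rendezvous

open Rendezvous

open Metric Set
open scoped NNReal

section ProofHelpers


section Helpers

lemma sum_fin_map_get {α M : Type*} [AddCommMonoid M] (l : List α) (f : α → M) :
    ∑ j : Fin l.length, f (l.get j) = (l.map f).sum := by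
  induction l with
  | nil => simp
  | cons a l ih => simpa [Fin.sum_univ_succ] using ih

lemma iInf_univ_coe {α : Type*} (f : α → ℝ≥0∞) :
    ⨅ x : (Set.univ : Set α), f (x : α) = ⨅ x : α, f x := by
  rw [iInf_subtype]; simp

lemma iSup_univ_coe {α : Type*} (f : α → ℝ≥0∞) :
    ⨆ x : (Set.univ : Set α), f (x : α) = ⨆ x : α, f x := by
  rw [iSup_subtype]; simp

variable {Y : Type*} [MetricSpace Y] [Nonempty Y] [MeasurableSpace Y] [BorelSpace Y]

noncomputable def empMeasure {n : ℕ} (w : Fin n → Y) : Measure Y :=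
  (n : ℝ≥0∞)⁻¹ • ∑ j, Measure.dirac (w j)

lemma empMeasure_tight {n : ℕ} (hn : 1 ≤ n) (w : Fin n → Y) :
    TightProbOn (empMeasure w) (Set.univ : Set Y) := by
  have hn0 : (n : ℝ≥0∞) ≠ 0 := by exact_mod_cast Nat.one_le_iff_ne_zero.mp hn
  have hrange : MeasurableSet (Set.range w) := (Set.finite_range w).measurableSet
  refine ⟨⟨?_⟩, ⟨?_⟩, by simp⟩
  · simp only [empMeasure, Measure.smul_apply, Measure.coe_finset_sum, Finset.sum_apply,
      Measure.dirac_apply_of_mem (Set.mem_univ _), smul_eq_mul]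
    simp [ENNReal.inv_mul_cancel hn0]
  · intro U hU r hr
    refine ⟨U ∩ Set.range w, Set.inter_subset_left,
      ((Set.finite_range w).inter_of_right U).isCompact, lt_of_lt_of_le hr ?_⟩
    have hdiff : empMeasure w (U \ Set.range w) = 0 := by
      simp only [empMeasure, Measure.smul_apply, Measure.coe_finset_sum, Finset.sum_apply,
        smul_eq_mul]
      have : ∀ j : Fin n, Measure.dirac (w j) (U \ Set.range w) = 0 := by
        intro j
        rw [Measure.dirac_apply' _ (hU.diff hrange)]
        simp [Set.indicator_of_notMem, Set.mem_range]
      simp [this]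
    calc empMeasure w U ≤ empMeasure w (U ∩ Set.range w) + empMeasure w (U \ Set.range w) := by
          conv_lhs => rw [← Set.inter_union_diff U (Set.range w)]
          exact measure_union_le _ _
      _ = empMeasure w (U ∩ Set.range w) := by rw [hdiff, add_zero]

lemma pot_empMeasure (k' : Y → Y → ℝ≥0∞) (hm : ∀ x, Measurable (k' x)) {n : ℕ}
    (w : Fin n → Y) (x : Y) :
    pot k' (empMeasure w) x = (∑ j, k' x (w j)) / (n : ℝ≥0∞) := by
  simp only [pot, empMeasure, lintegral_smul_measure, lintegral_finset_sum_measure,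
    lintegral_dirac' _ (hm x), ENNReal.div_eq_inv_mul, smul_eq_mul]

end Helpers

section Minimax

variable {Y : Type*} [Nonempty Y]

lemma chebMn_le_dual (k' : Y → Y → ℝ≥0∞) (hsymm : ∀ x y, k' x y = k' y x)
    {C' : ℝ≥0∞} (hC : C' ≠ ⊤) (hb : ∀ x y, k' x y ≤ C')
    {n m : ℕ} (hn : 1 ≤ n) (hm : 1 ≤ m) :
    chebMn k' n (Set.univ : Set Y) Set.univ ≤ chebMnDual k' m (Set.univ : Set Y) Set.univ := by
  have hn0 : (n : ℝ≥0∞) ≠ 0 := by exact_mod_cast Nat.one_le_iff_ne_zero.mp hn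
  have hm0 : (m : ℝ≥0∞) ≠ 0 := by exact_mod_cast Nat.one_le_iff_ne_zero.mp hm
  have hnt : (n : ℝ≥0∞) ≠ ⊤ := ENNReal.natCast_ne_top n
  have hmt : (m : ℝ≥0∞) ≠ ⊤ := ENNReal.natCast_ne_top m
  rw [chebMn, chebMnDual]
  refine iSup_le fun w => le_iInf fun v => ?_
  set T : ℝ≥0∞ := ⨆ x : (Set.univ : Set Y), (∑ i, k' (x : Y) ((v i : Y))) / (m : ℝ≥0∞) with hT
  have hTle : T ≤ C' := by
    refine iSup_le fun x => ?_
    rw [ENNReal.div_le_iff_le_mul (Or.inl hm0) (Or.inl hmt)]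
    calc (∑ i, k' (x : Y) ((v i : Y))) ≤ ∑ _i : Fin m, C' := Finset.sum_le_sum fun i _ => hb _ _
      _ = C' * m := by simp [mul_comm]
  have hTt : T ≠ ⊤ := (lt_of_le_of_lt hTle hC.lt_top).ne
  set L : ℝ≥0∞ := ⨅ x : (Set.univ : Set Y), (∑ j, k' (x : Y) ((w j : Y))) / (n : ℝ≥0∞) with hL
  -- show L ≤ T
  have key : (m : ℝ≥0∞) * L ≤ (m : ℝ≥0∞) * T := by
    have h1 : (m : ℝ≥0∞) * L ≤ ∑ i : Fin m, (∑ j, k' ((v i : Y)) ((w j : Y))) / (n : ℝ≥0∞) := by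
      calc (m : ℝ≥0∞) * L = ∑ _i : Fin m, L := by simp [mul_comm]
        _ ≤ _ := Finset.sum_le_sum fun i _ => iInf_le _ (v i)
    have h2 : ∑ i : Fin m, (∑ j, k' ((v i : Y)) ((w j : Y))) / (n : ℝ≥0∞)
        = (∑ j : Fin n, ∑ i : Fin m, k' ((w j : Y)) ((v i : Y))) / (n : ℝ≥0∞) := by
      rw [show (∑ i : Fin m, (∑ j, k' ((v i : Y)) ((w j : Y))) / (n : ℝ≥0∞))
          = (∑ i : Fin m, ∑ j : Fin n, k' ((v i : Y)) ((w j : Y))) / (n : ℝ≥0∞) by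
        simp [div_eq_mul_inv, Finset.sum_mul], Finset.sum_comm]
      congr 1
      exact Finset.sum_congr rfl fun j _ => Finset.sum_congr rfl fun i _ => (hsymm _ _)
    have h3 : ∀ j : Fin n, ∑ i : Fin m, k' ((w j : Y)) ((v i : Y)) ≤ T * m := by
      intro j
      have := le_iSup (fun x : (Set.univ : Set Y) =>
        (∑ i, k' (x : Y) ((v i : Y))) / (m : ℝ≥0∞)) (w j)
      rw [← hT] at this
      exact (ENNReal.div_le_iff_le_mul (Or.inl hm0) (Or.inl hmt)).mp this
    have h4 : (∑ j : Fin n, ∑ i : Fin m, k' ((w j : Y)) ((v i : Y))) / (n : ℝ≥0∞)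
        ≤ T * m := by
      rw [ENNReal.div_le_iff_le_mul (Or.inl hn0) (Or.inl hnt)]
      calc ∑ j : Fin n, ∑ i : Fin m, k' ((w j : Y)) ((v i : Y))
          ≤ ∑ _j : Fin n, T * m := Finset.sum_le_sum fun j _ => h3 j
        _ = T * m * n := by simp [mul_comm]
    calc (m : ℝ≥0∞) * L ≤ _ := h1
      _ = _ := h2
      _ ≤ T * m := h4
      _ = m * T := mul_comm _ _
  exact (ENNReal.mul_le_mul_iff_right hm0 hmt).mp key

end Minimax

section Approx

variable {Y : Type*} [MetricSpace Y] [Nonempty Y] [MeasurableSpace Y] [BorelSpace Y]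

lemma sum_fin_cast_get {α M : Type*} [AddCommMonoid M] (l : List α) {N : ℕ}
    (h : l.length = N) (f : α → M) :
    ∑ j : Fin N, f (l.get (Fin.cast h.symm j)) = (l.map f).sum := by
  subst h
  simpa using sum_fin_map_get l f

lemma approx_lemma (k : Y → Y → ℝ) (hsymm : ∀ x y : Y, k x y = k y x)
    {C : ℝ} (hC : 0 < C) (hkC : ∀ x y : Y, k x y ≤ C) (hk0 : ∀ x y : Y, 0 ≤ k x y)
    (hequi : ∀ ε > (0 : ℝ), ∃ δ > (0 : ℝ), ∀ x x' y : Y,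
      dist x x' < δ → |k x y - k x' y| < ε)
    (μ : Measure Y) (hμ : TightProbOn μ (Set.univ : Set Y)) {ε : ℝ} (hε : 0 < ε) :
    ∃ n : ℕ, 1 ≤ n ∧ ∃ w : Fin n → Y, ∀ x : Y,
      (∑ j, ENNReal.ofReal (k x (w j))) / (n : ℝ≥0∞)
          ≤ pot (fun x y => ENNReal.ofReal (k x y)) μ x + ENNReal.ofReal ε ∧
      pot (fun x y => ENNReal.ofReal (k x y)) μ x
          ≤ (∑ j, ENNReal.ofReal (k x (w j))) / (n : ℝ≥0∞) + ENNReal.ofReal ε := by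
  classical
  haveI hprob : IsProbabilityMeasure μ := hμ.1
  set k' : Y → Y → ℝ≥0∞ := fun x y => ENNReal.ofReal (k x y) with hk'
  set C' : ℝ≥0∞ := ENNReal.ofReal C with hC'
  have hk'C : ∀ x y : Y, k' x y ≤ C' := fun x y => ENNReal.ofReal_le_ofReal (hkC x y)
  -- continuity in the second variable
  have hcont : ∀ x : Y, Continuous fun z => k x z := by
    intro x
    rw [Metric.continuous_iff]
    intro b ε' hε'
    obtain ⟨δ, hδ, hδ'⟩ := hequi ε' hε'
    exact ⟨δ, hδ, fun a ha => by
      rw [Real.dist_eq, hsymm x a, hsymm x b]; exact hδ' a b x ha⟩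
  have hmeas : ∀ x : Y, Measurable fun z => k' x z := fun x =>
    ENNReal.measurable_ofReal.comp (hcont x).measurable
  -- ε/3 and δ
  set ε3 : ℝ := ε / 3 with hε3def
  have hε3 : 0 < ε3 := by positivity
  set E3 : ℝ≥0∞ := ENNReal.ofReal ε3 with hE3
  obtain ⟨δ, hδpos, hδ⟩ := hequi ε3 hε3
  have hδ2 : ∀ x z z' : Y, dist z z' < δ → |k x z - k x z'| < ε3 := by
    intro x z z' h
    rw [hsymm x z, hsymm x z']
    exact hδ z z' x h
  -- compact set K with small complement
  set η : ℝ≥0∞ := ENNReal.ofReal (ε3 / C) with hη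
  have hηpos : 0 < η := ENNReal.ofReal_pos.mpr (by positivity)
  obtain ⟨K, hKc, hKμ⟩ : ∃ K : Set Y, IsCompact K ∧ μ Kᶜ ≤ η := by
    by_cases hη1 : (1 : ℝ≥0∞) ≤ η
    · exact ⟨∅, isCompact_empty, by simpa using hη1⟩
    · push_neg at hη1
      have huniv : μ Set.univ = 1 := measure_univ
      have h1 : 1 - η < μ Set.univ := by
        rw [huniv]; exact ENNReal.sub_lt_self one_ne_top one_ne_zero hηpos.ne'
      obtain ⟨K, -, hKcomp, hKgt⟩ := hμ.2.1.innerRegular MeasurableSet.univ (1 - η) h1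
      refine ⟨K, hKcomp, ?_⟩
      have hKm : MeasurableSet K := hKcomp.isClosed.measurableSet
      have : μ Kᶜ = 1 - μ K := by
        rw [← measure_univ (μ := μ)]
        exact measure_compl hKm (measure_ne_top μ K)
      rw [this]
      rw [tsub_le_iff_right]
      calc (1 : ℝ≥0∞) = (1 - η) + η := (tsub_add_cancel_of_le hη1.le).symm
        _ ≤ μ K + η := add_le_add_left hKgt.le _
        _ = η + μ K := add_comm _ _
  -- finite cover of K by δ-balls
  obtain ⟨t, hcover⟩ := hKc.elim_finite_subcover (fun z : Y => Metric.ball z δ)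
    (fun z => Metric.isOpen_ball) (fun z _ => Set.mem_iUnion.mpr ⟨z, Metric.mem_ball_self hδpos⟩)
  set l : List Y := t.toList with hl
  set m : ℕ := l.length with hm
  set y₀ : Y := Classical.arbitrary Y with hy₀
  set Ymap : ℕ → Y := fun i => if h : i < m then l.get ⟨i, h⟩ else y₀ with hYmap
  set B : ℕ → Set Y := fun i => if i < m then Metric.ball (Ymap i) δ else ∅ with hB
  have hBmeas : ∀ i, MeasurableSet (B i) := by
    intro i
    by_cases h : i < m <;> simp [hB, h, Metric.isOpen_ball.measurableSet]
  set A : ℕ → Set Y := disjointed B with hA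
  have hAmeas : ∀ i, MeasurableSet (A i) := MeasurableSet.disjointed hBmeas
  have hAdisj : Pairwise (Function.onFun Disjoint A) := disjoint_disjointed B
  have hAsub : ∀ i, A i ⊆ B i := disjointed_subset B
  have hAempty : ∀ i, m ≤ i → A i = ∅ := by
    intro i hi
    have : B i = ∅ := by simp [hB, Nat.not_lt.mpr hi]
    exact Set.subset_empty_iff.mp (this ▸ hAsub i)
  set S : Set Y := ⋃ i, A i with hS
  have hSmeas : MeasurableSet S := MeasurableSet.iUnion hAmeas
  have hKS : K ⊆ S := by
    intro z hz
    have := hcover hz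
    rw [Set.mem_iUnion₂] at this
    obtain ⟨c, hct, hzc⟩ := this
    obtain ⟨i, hi⟩ := List.mem_iff_get.mp (Finset.mem_toList.mpr hct)
    rw [hS, iUnion_disjointed, Set.mem_iUnion]
    refine ⟨i.1, ?_⟩
    have him : i.1 < m := i.2
    simp only [hB, if_pos him]
    have hyc : Ymap i.1 = c := by
      simp only [hYmap, dif_pos him]
      exact hi
    rw [hyc]
    exact hzc
  have hScompl : μ Sᶜ ≤ η := le_trans (measure_mono (Set.compl_subset_compl.mpr hKS)) hKμ
  -- weights
  set p : ℕ → ℝ≥0∞ := fun i => μ (A i) with hp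
  have hpt : ∀ i, p i ≠ ⊤ := fun i => measure_ne_top μ _
  set r : ℕ → ℝ := fun i => (p i).toReal with hr
  have hr0 : ∀ i, 0 ≤ r i := fun i => ENNReal.toReal_nonneg
  have hpr : ∀ i, p i = ENNReal.ofReal (r i) := fun i => (ENNReal.ofReal_toReal (hpt i)).symm
  set q : ℝ≥0∞ := μ Sᶜ with hq
  have hqt : q ≠ ⊤ := measure_ne_top μ _
  set q' : ℝ := q.toReal with hq'
  have hqr : q = ENNReal.ofReal q' := (ENNReal.ofReal_toReal hqt).symm
  have hqη : q ≤ η := hScompl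
  have hμS : μ S = ∑ i ∈ Finset.range m, p i := by
    rw [hS, measure_iUnion hAdisj hAmeas]
    exact tsum_eq_sum fun i hi => by
      rw [hAempty i (Nat.le_of_not_lt fun h => hi (Finset.mem_range.mpr h))]
      exact measure_empty
  have hSq : μ S + q = 1 := by
    rw [hq, measure_add_measure_compl hSmeas]; exact measure_univ
  have hsum_r : ∑ i ∈ Finset.range m, r i = (μ S).toReal := by
    rw [hμS, ENNReal.toReal_sum fun i _ => hpt i]
  have hsum_p_le : ∑ i ∈ Finset.range m, p i ≤ 1 := by rw [← hμS]; exact prob_le_one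
  have hsum_r_le : ∑ i ∈ Finset.range m, r i ≤ 1 := by
    rw [hsum_r]
    exact le_trans (ENNReal.toReal_mono one_ne_top prob_le_one) (by norm_num)
  have hq'_eq : q' = 1 - ∑ i ∈ Finset.range m, r i := by
    have h := congrArg ENNReal.toReal hSq
    rw [ENNReal.toReal_add (measure_ne_top μ S) hqt] at h
    simp only [ENNReal.toReal_one] at h
    rw [hsum_r, hq']
    linarith
  -- potential decomposition
  have hpot : ∀ x : Y, pot k' μ x
      = (∑ i ∈ Finset.range m, ∫⁻ z in A i, k' x z ∂μ) + ∫⁻ z in Sᶜ, k' x z ∂μ := by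
    intro x
    rw [pot, ← lintegral_add_compl (fun z => k' x z) hSmeas]
    congr 1
    rw [hS, lintegral_iUnion hAmeas hAdisj]
    exact tsum_eq_sum fun i hi => by
      rw [hAempty i (Nat.le_of_not_lt fun h => hi (Finset.mem_range.mpr h)),
        Measure.restrict_empty, lintegral_zero_measure]
  have hAball : ∀ i, i < m → A i ⊆ Metric.ball (Ymap i) δ := by
    intro i him
    have h1 := hAsub i
    simp only [hB, if_pos him] at h1
    exact h1
  -- upper and lower bounds per piece
  have hub : ∀ x : Y, ∀ i ∈ Finset.range m,
      ∫⁻ z in A i, k' x z ∂μ ≤ (k' x (Ymap i) + E3) * p i := by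
    intro x i hi
    have him : i < m := Finset.mem_range.mp hi
    calc ∫⁻ z in A i, k' x z ∂μ ≤ ∫⁻ _z in A i, (k' x (Ymap i) + E3) ∂μ := by
          refine setLIntegral_mono measurable_const fun z hz => ?_
          have hd : dist z (Ymap i) < δ := Metric.mem_ball.mp (hAball i him hz)
          have h3 := abs_lt.mp (hδ2 x z (Ymap i) hd)
          calc k' x z = ENNReal.ofReal (k x z) := rfl
            _ ≤ ENNReal.ofReal (k x (Ymap i) + ε3) :=
                ENNReal.ofReal_le_ofReal (by linarith [h3.2])
            _ = k' x (Ymap i) + E3 := ENNReal.ofReal_add (hk0 _ _) hε3.le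
      _ = (k' x (Ymap i) + E3) * p i := setLIntegral_const _ _
  have hlb : ∀ x : Y, ∀ i ∈ Finset.range m,
      k' x (Ymap i) * p i ≤ (∫⁻ z in A i, k' x z ∂μ) + E3 * p i := by
    intro x i hi
    have him : i < m := Finset.mem_range.mp hi
    calc k' x (Ymap i) * p i = ∫⁻ _z in A i, k' x (Ymap i) ∂μ := (setLIntegral_const _ _).symm
      _ ≤ ∫⁻ z in A i, (k' x z + E3) ∂μ := by
          refine setLIntegral_mono ((hmeas x).add measurable_const) fun z hz => ?_
          have hd : dist z (Ymap i) < δ := Metric.mem_ball.mp (hAball i him hz)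
          have h3 := abs_lt.mp (hδ2 x z (Ymap i) hd)
          calc k' x (Ymap i) = ENNReal.ofReal (k x (Ymap i)) := rfl
            _ ≤ ENNReal.ofReal (k x z + ε3) :=
                ENNReal.ofReal_le_ofReal (by linarith [h3.1])
            _ = k' x z + E3 := ENNReal.ofReal_add (hk0 _ _) hε3.le
      _ = (∫⁻ z in A i, k' x z ∂μ) + E3 * p i := by
          rw [lintegral_add_right _ measurable_const, setLIntegral_const]
  -- the intermediate quantity Sx
  set Sx : Y → ℝ≥0∞ :=
    fun x => (∑ i ∈ Finset.range m, p i * k' x (Ymap i)) + q * k' x y₀ with hSxdef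
  have hC'η : C' * η ≤ E3 := by
    rw [hC', hη, ← ENNReal.ofReal_mul hC.le]
    apply ENNReal.ofReal_le_ofReal
    rw [mul_div_cancel₀ _ hC.ne']
  have hpot_le : ∀ x, pot k' μ x ≤ Sx x + (E3 + E3) := by
    intro x
    rw [hpot x]
    have h1 : ∑ i ∈ Finset.range m, ∫⁻ z in A i, k' x z ∂μ
        ≤ (∑ i ∈ Finset.range m, p i * k' x (Ymap i)) + E3 := by
      calc ∑ i ∈ Finset.range m, ∫⁻ z in A i, k' x z ∂μ
          ≤ ∑ i ∈ Finset.range m, (k' x (Ymap i) + E3) * p i := Finset.sum_le_sum (hub x)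
        _ = (∑ i ∈ Finset.range m, p i * k' x (Ymap i))
            + E3 * ∑ i ∈ Finset.range m, p i := by
            rw [Finset.mul_sum, ← Finset.sum_add_distrib]
            exact Finset.sum_congr rfl fun i _ => by ring
        _ ≤ (∑ i ∈ Finset.range m, p i * k' x (Ymap i)) + E3 := by
            exact add_le_add_right (le_trans (mul_le_mul_right hsum_p_le E3) (by rw [mul_one])) _
    have h4 : ∫⁻ z in Sᶜ, k' x z ∂μ ≤ E3 := by
      calc ∫⁻ z in Sᶜ, k' x z ∂μ ≤ ∫⁻ _z in Sᶜ, C' ∂μ :=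
            setLIntegral_mono measurable_const fun z _ => hk'C x z
        _ = C' * μ Sᶜ := setLIntegral_const _ _
        _ ≤ C' * η := mul_le_mul_right hqη _
        _ ≤ E3 := hC'η
    calc (∑ i ∈ Finset.range m, ∫⁻ z in A i, k' x z ∂μ) + ∫⁻ z in Sᶜ, k' x z ∂μ
        ≤ ((∑ i ∈ Finset.range m, p i * k' x (Ymap i)) + E3) + E3 := add_le_add h1 h4
      _ ≤ Sx x + (E3 + E3) := by
          rw [hSxdef]
          calc ((∑ i ∈ Finset.range m, p i * k' x (Ymap i)) + E3) + E3
              = (∑ i ∈ Finset.range m, p i * k' x (Ymap i)) + (E3 + E3) := by ring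
            _ ≤ ((∑ i ∈ Finset.range m, p i * k' x (Ymap i)) + q * k' x y₀) + (E3 + E3) := by
                exact add_le_add_left le_self_add _
  have hSx_le_pot : ∀ x, Sx x ≤ pot k' μ x + (E3 + E3) := by
    intro x
    rw [hSxdef, hpot x]
    have h1 : ∑ i ∈ Finset.range m, p i * k' x (Ymap i)
        ≤ (∑ i ∈ Finset.range m, ∫⁻ z in A i, k' x z ∂μ) + E3 := by
      calc ∑ i ∈ Finset.range m, p i * k' x (Ymap i)
          = ∑ i ∈ Finset.range m, k' x (Ymap i) * p i := by
            exact Finset.sum_congr rfl fun i _ => mul_comm _ _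
        _ ≤ ∑ i ∈ Finset.range m, ((∫⁻ z in A i, k' x z ∂μ) + E3 * p i) :=
            Finset.sum_le_sum (hlb x)
        _ = (∑ i ∈ Finset.range m, ∫⁻ z in A i, k' x z ∂μ)
            + E3 * ∑ i ∈ Finset.range m, p i := by
            rw [Finset.sum_add_distrib, Finset.mul_sum]
        _ ≤ _ := add_le_add_right (le_trans (mul_le_mul_right hsum_p_le E3) (by rw [mul_one])) _
    have h2 : q * k' x y₀ ≤ E3 := by
      calc q * k' x y₀ ≤ η * C' := mul_le_mul' hqη (hk'C _ _)
        _ = C' * η := mul_comm _ _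
        _ ≤ E3 := hC'η
    calc (∑ i ∈ Finset.range m, p i * k' x (Ymap i)) + q * k' x y₀
        ≤ ((∑ i ∈ Finset.range m, ∫⁻ z in A i, k' x z ∂μ) + E3) + E3 := add_le_add h1 h2
      _ = (∑ i ∈ Finset.range m, ∫⁻ z in A i, k' x z ∂μ) + (E3 + E3) := by ring
      _ ≤ ((∑ i ∈ Finset.range m, ∫⁻ z in A i, k' x z ∂μ) + ∫⁻ z in Sᶜ, k' x z ∂μ)
          + (E3 + E3) := add_le_add_left le_self_add _
  -- choice of N and integer weights
  set N : ℕ := m * ⌈3 * C / ε⌉₊ + 1 with hNdef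
  clear_value N
  have hN1 : 1 ≤ N := by rw [hNdef]; exact Nat.le_add_left 1 _
  have hNpos : (0:ℝ) < (N:ℝ) := by exact_mod_cast hN1
  have hNC : (m:ℝ) * C ≤ (N:ℝ) * ε3 := by
    have h1 : (3 * C / ε : ℝ) ≤ (⌈3 * C / ε⌉₊ : ℝ) := Nat.le_ceil _
    have h2 : (m:ℝ) * (3*C/ε) ≤ (N:ℝ) := by
      calc (m:ℝ) * (3*C/ε) ≤ (m:ℝ) * (⌈3*C/ε⌉₊ : ℝ) :=
            mul_le_mul_of_nonneg_left h1 (Nat.cast_nonneg m)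
        _ ≤ (N:ℝ) := by rw [hNdef]; push_cast; linarith
    have h3 : (m:ℝ) * C = ((m:ℝ) * (3*C/ε)) * (ε/3) := by field_simp
    rw [h3, hε3def]
    exact mul_le_mul_of_nonneg_right h2 (by positivity)
  set c : ℕ → ℕ := fun i => ⌊(N:ℝ) * r i⌋₊ with hcdef
  clear_value c
  have hcle : ∀ i, (c i : ℝ) ≤ (N:ℝ) * r i := by
    intro i; rw [hcdef]
    exact Nat.floor_le (mul_nonneg (Nat.cast_nonneg N) (hr0 i))
  have hcge : ∀ i, (N:ℝ) * r i ≤ (c i : ℝ) + 1 := by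
    intro i; rw [hcdef]
    exact (Nat.lt_floor_add_one _).le
  set cs : ℕ := ∑ i ∈ Finset.range m, c i with hcsdef
  clear_value cs
  have hcsN : (cs:ℝ) ≤ (N:ℝ) := by
    rw [hcsdef]
    push_cast
    calc ∑ i ∈ Finset.range m, (c i:ℝ) ≤ ∑ i ∈ Finset.range m, (N:ℝ) * r i :=
          Finset.sum_le_sum fun i _ => hcle i
      _ = (N:ℝ) * ∑ i ∈ Finset.range m, r i := (Finset.mul_sum _ _ _).symm
      _ ≤ (N:ℝ) * 1 := mul_le_mul_of_nonneg_left hsum_r_le hNpos.le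
      _ = (N:ℝ) := mul_one _
  have hcsle : cs ≤ N := by exact_mod_cast hcsN
  set c₀ : ℕ := N - cs with hc₀def
  clear_value c₀
  have hc₀R : (c₀:ℝ) = (N:ℝ) - (cs:ℝ) := by
    rw [hc₀def]; push_cast [Nat.cast_sub hcsle]; ring
  have hcsr : (cs:ℝ) ≤ (N:ℝ) * ∑ i ∈ Finset.range m, r i := by
    rw [hcsdef, Finset.mul_sum]
    push_cast
    exact Finset.sum_le_sum fun i _ => hcle i
  have hrcs : (N:ℝ) * ∑ i ∈ Finset.range m, r i ≤ (cs:ℝ) + m := by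
    rw [Finset.mul_sum]
    calc ∑ i ∈ Finset.range m, (N:ℝ) * r i ≤ ∑ i ∈ Finset.range m, ((c i:ℝ) + 1) :=
          Finset.sum_le_sum fun i _ => hcge i
      _ = (cs:ℝ) + m := by rw [Finset.sum_add_distrib, hcsdef]; push_cast; simp
  -- real inequalities relating weights
  have hq'c₀ : q' ≤ (c₀:ℝ)/(N:ℝ) := by
    rw [hq'_eq, le_div_iff₀ hNpos, hc₀R]
    nlinarith [hcsr]
  have hc₀q' : (c₀:ℝ)/(N:ℝ) ≤ q' + (m:ℝ)/(N:ℝ) := by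
    rw [hq'_eq, div_le_iff₀ hNpos, hc₀R]
    have expand : (1 - ∑ i ∈ Finset.range m, r i + (m:ℝ)/(N:ℝ)) * (N:ℝ)
        = (N:ℝ) - (N:ℝ) * ∑ i ∈ Finset.range m, r i + (m:ℝ) := by
      field_simp
    rw [expand]
    linarith [hrcs]
  -- transfer to ℝ≥0∞
  have hdivN : ∀ a : ℕ, (a : ℝ≥0∞)/(N:ℝ≥0∞) = ENNReal.ofReal ((a:ℝ)/(N:ℝ)) := by
    intro a
    rw [ENNReal.ofReal_div_of_pos hNpos, ENNReal.ofReal_natCast, ENNReal.ofReal_natCast]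
  have hi1 : ∀ i, (c i : ℝ≥0∞)/(N:ℝ≥0∞) ≤ p i := by
    intro i
    rw [hdivN, hpr i]
    apply ENNReal.ofReal_le_ofReal
    rw [div_le_iff₀ hNpos]
    calc (c i : ℝ) ≤ (N:ℝ) * r i := hcle i
      _ = r i * (N:ℝ) := mul_comm _ _
  have hi2 : ∀ i, p i ≤ (c i : ℝ≥0∞)/(N:ℝ≥0∞) + 1/(N:ℝ≥0∞) := by
    intro i
    have h1N : (1:ℝ≥0∞)/(N:ℝ≥0∞) = ENNReal.ofReal ((1:ℝ)/(N:ℝ)) := by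
      rw [ENNReal.ofReal_div_of_pos hNpos]; simp
    rw [hdivN, hpr i, h1N, ← ENNReal.ofReal_add (by positivity) (by positivity)]
    apply ENNReal.ofReal_le_ofReal
    rw [← add_div, le_div_iff₀ hNpos]
    calc r i * (N:ℝ) = (N:ℝ) * r i := mul_comm _ _
      _ ≤ (c i : ℝ) + 1 := hcge i
  have hi3 : q ≤ (c₀ : ℝ≥0∞)/(N:ℝ≥0∞) := by
    rw [hdivN, hqr]
    exact ENNReal.ofReal_le_ofReal hq'c₀
  have hi4 : (c₀ : ℝ≥0∞)/(N:ℝ≥0∞) ≤ q + (m:ℝ≥0∞)/(N:ℝ≥0∞) := by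
    rw [hdivN, hdivN, hqr, ← ENNReal.ofReal_add ENNReal.toReal_nonneg (by positivity)]
    exact ENNReal.ofReal_le_ofReal hc₀q'
  have hmnC' : ((m:ℝ≥0∞)/(N:ℝ≥0∞)) * C' ≤ E3 := by
    rw [hdivN, hC', ← ENNReal.ofReal_mul (by positivity)]
    apply ENNReal.ofReal_le_ofReal
    rw [hε3def, div_mul_eq_mul_div, div_le_iff₀ hNpos]
    calc (m:ℝ) * C ≤ (N:ℝ) * ε3 := hNC
      _ = ε / 3 * (N:ℝ) := by rw [hε3def]; ring
  -- the empirical average function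
  set E : Y → ℝ≥0∞ := fun x =>
    ((∑ i ∈ Finset.range m, (c i : ℝ≥0∞) * k' x (Ymap i)) + (c₀:ℝ≥0∞) * k' x y₀) / (N:ℝ≥0∞)
    with hEdef
  have hEexp : ∀ x, E x = (∑ i ∈ Finset.range m, ((c i : ℝ≥0∞)/(N:ℝ≥0∞)) * k' x (Ymap i))
      + ((c₀:ℝ≥0∞)/(N:ℝ≥0∞)) * k' x y₀ := by
    intro x
    simp only [hEdef, div_eq_mul_inv, Finset.sum_mul, add_mul]
    congr 1
    · exact Finset.sum_congr rfl fun i _ => by ring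
    · ring
  have hE_le_Sx : ∀ x, E x ≤ Sx x + E3 := by
    intro x
    rw [hEexp x]
    have t1 : ∑ i ∈ Finset.range m, ((c i : ℝ≥0∞)/(N:ℝ≥0∞)) * k' x (Ymap i)
        ≤ ∑ i ∈ Finset.range m, p i * k' x (Ymap i) :=
      Finset.sum_le_sum fun i _ => mul_le_mul_left (hi1 i) _
    have t2 : ((c₀:ℝ≥0∞)/(N:ℝ≥0∞)) * k' x y₀ ≤ q * k' x y₀ + E3 := by
      calc ((c₀:ℝ≥0∞)/(N:ℝ≥0∞)) * k' x y₀ ≤ (q + (m:ℝ≥0∞)/(N:ℝ≥0∞)) * k' x y₀ :=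
            mul_le_mul_left hi4 _
        _ = q * k' x y₀ + ((m:ℝ≥0∞)/(N:ℝ≥0∞)) * k' x y₀ := add_mul _ _ _
        _ ≤ q * k' x y₀ + E3 :=
            add_le_add_right (le_trans (mul_le_mul_right (hk'C _ _) _) hmnC') _
    calc (∑ i ∈ Finset.range m, ((c i : ℝ≥0∞)/(N:ℝ≥0∞)) * k' x (Ymap i))
          + ((c₀:ℝ≥0∞)/(N:ℝ≥0∞)) * k' x y₀
        ≤ (∑ i ∈ Finset.range m, p i * k' x (Ymap i)) + (q * k' x y₀ + E3) := add_le_add t1 t2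
      _ = Sx x + E3 := by rw [hSxdef, add_assoc]
  have hSx_le_E : ∀ x, Sx x ≤ E x + E3 := by
    intro x
    rw [hEexp x, hSxdef]
    have t1 : ∑ i ∈ Finset.range m, p i * k' x (Ymap i)
        ≤ (∑ i ∈ Finset.range m, ((c i:ℝ≥0∞)/(N:ℝ≥0∞)) * k' x (Ymap i)) + E3 := by
      calc ∑ i ∈ Finset.range m, p i * k' x (Ymap i)
          ≤ ∑ i ∈ Finset.range m, (((c i:ℝ≥0∞)/(N:ℝ≥0∞)) + 1/(N:ℝ≥0∞)) * k' x (Ymap i) :=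
            Finset.sum_le_sum fun i _ => mul_le_mul_left (hi2 i) _
        _ = (∑ i ∈ Finset.range m, ((c i:ℝ≥0∞)/(N:ℝ≥0∞)) * k' x (Ymap i))
            + ∑ i ∈ Finset.range m, (1/(N:ℝ≥0∞)) * k' x (Ymap i) := by
            rw [← Finset.sum_add_distrib]
            exact Finset.sum_congr rfl fun i _ => add_mul _ _ _
        _ ≤ (∑ i ∈ Finset.range m, ((c i:ℝ≥0∞)/(N:ℝ≥0∞)) * k' x (Ymap i)) + E3 := by
            refine add_le_add_right ?_ _
            calc ∑ i ∈ Finset.range m, (1/(N:ℝ≥0∞)) * k' x (Ymap i)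
                ≤ ∑ _i ∈ Finset.range m, (1/(N:ℝ≥0∞)) * C' :=
                  Finset.sum_le_sum fun i _ => mul_le_mul_right (hk'C _ _) _
              _ = (m:ℝ≥0∞) * ((1/(N:ℝ≥0∞)) * C') := by
                  rw [Finset.sum_const, Finset.card_range, nsmul_eq_mul]
              _ = ((m:ℝ≥0∞)/(N:ℝ≥0∞)) * C' := by
                  rw [div_eq_mul_inv, div_eq_mul_inv, one_mul]; ring
              _ ≤ E3 := hmnC'
    have t2 : q * k' x y₀ ≤ ((c₀:ℝ≥0∞)/(N:ℝ≥0∞)) * k' x y₀ := mul_le_mul_left hi3 _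
    calc (∑ i ∈ Finset.range m, p i * k' x (Ymap i)) + q * k' x y₀
        ≤ ((∑ i ∈ Finset.range m, ((c i:ℝ≥0∞)/(N:ℝ≥0∞)) * k' x (Ymap i)) + E3)
          + ((c₀:ℝ≥0∞)/(N:ℝ≥0∞)) * k' x y₀ := add_le_add t1 t2
      _ = ((∑ i ∈ Finset.range m, ((c i:ℝ≥0∞)/(N:ℝ≥0∞)) * k' x (Ymap i))
          + ((c₀:ℝ≥0∞)/(N:ℝ≥0∞)) * k' x y₀) + E3 := add_right_comm _ _ _
  have h3E : E3 + (E3 + E3) = ENNReal.ofReal ε := by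
    rw [hE3, ← ENNReal.ofReal_add hε3.le hε3.le, ← ENNReal.ofReal_add hε3.le (by positivity)]
    congr 1
    rw [hε3def]; ring
  have hfinal1 : ∀ x, E x ≤ pot k' μ x + ENNReal.ofReal ε := by
    intro x
    calc E x ≤ Sx x + E3 := hE_le_Sx x
      _ ≤ (pot k' μ x + (E3 + E3)) + E3 := add_le_add_left (hSx_le_pot x) _
      _ = pot k' μ x + (E3 + (E3 + E3)) := by ring
      _ = pot k' μ x + ENNReal.ofReal ε := by rw [h3E]
  have hfinal2 : ∀ x, pot k' μ x ≤ E x + ENNReal.ofReal ε := by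
    intro x
    calc pot k' μ x ≤ Sx x + (E3 + E3) := hpot_le x
      _ ≤ (E x + E3) + (E3 + E3) := add_le_add_left (hSx_le_E x) _
      _ = E x + (E3 + (E3 + E3)) := by ring
      _ = E x + ENNReal.ofReal ε := by rw [h3E]
  -- construct the list of sample points
  set L : List Y :=
    (List.ofFn (fun i : Fin m => List.replicate (c i.1) (Ymap i.1))).flatten
      ++ List.replicate c₀ y₀ with hLdef
  have hLlen : L.length = N := by
    rw [hLdef, List.length_append, List.length_replicate, List.length_flatten,
      List.map_ofFn, List.sum_ofFn]
    have hcsum : ∑ i : Fin m, (List.length ∘ fun i : Fin m =>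
        List.replicate (c i.1) (Ymap i.1)) i = cs := by
      rw [hcsdef, ← Fin.sum_univ_eq_sum_range (fun i => c i) m]
      exact Finset.sum_congr rfl fun i _ => by simp
    rw [hcsum]
    omega
  set w : Fin N → Y := fun j => L.get (Fin.cast hLlen.symm j) with hwdef
  have hkey : ∀ x : Y, ∑ j : Fin N, ENNReal.ofReal (k x (w j))
      = (∑ i ∈ Finset.range m, (c i : ℝ≥0∞) * k' x (Ymap i)) + (c₀:ℝ≥0∞) * k' x y₀ := by
    intro x
    simp only [hwdef]
    rw [sum_fin_cast_get L hLlen (fun z => ENNReal.ofReal (k x z))]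
    simp only [hLdef, List.map_append, List.sum_append, List.map_flatten, List.map_ofFn,
      List.map_replicate, List.sum_replicate, List.sum_flatten, List.sum_ofFn,
      Function.comp, nsmul_eq_mul, hk']
    congr 1
    rw [← Fin.sum_univ_eq_sum_range (fun i => (c i : ℝ≥0∞) * ENNReal.ofReal (k x (Ymap i))) m]
  refine ⟨N, hN1, w, fun x => ?_⟩
  have hEeq : (∑ j : Fin N, ENNReal.ofReal (k x (w j))) / (N:ℝ≥0∞) = E x := by
    rw [hkey x, hEdef]
  rw [hEeq]
  exact ⟨hfinal1 x, hfinal2 x⟩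




end Approx

end ProofHelpers



/-- For a metric space `(Y,d)` and a positive, symmetric, bounded kernel
`k` such that `{k(·,y) : y ∈ Y}` is uniformly equicontinuous, the average interval
equals the rendezvous interval and both are nonempty:
`q̲(Y,Y) = M(Y) ≤ M̄(Y) = q(Y,Y)`. -/
theorem average_eq_rendezvous_of_equicontinuous {Y : Type*} [MetricSpace Y] [Nonempty Y]
    [MeasurableSpace Y] [BorelSpace Y]
    (k : Y → Y → ℝ) (hpos : ∀ x y : Y, 0 < k x y) (hsymm : ∀ x y : Y, k x y = k y x)
    (hbdd : ∃ C : ℝ, ∀ x y : Y, k x y ≤ C)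
    (hequi : ∀ ε > (0 : ℝ), ∃ δ > (0 : ℝ), ∀ x x' y : Y,
      dist x x' < δ → |k x y - k x' y| < ε) :
    qLow (fun x y => ENNReal.ofReal (k x y)) (Set.univ : Set Y) Set.univ
        = chebM (fun x y => ENNReal.ofReal (k x y)) (Set.univ : Set Y) Set.univ ∧
    chebM (fun x y => ENNReal.ofReal (k x y)) (Set.univ : Set Y) Set.univ
        ≤ chebMDual (fun x y => ENNReal.ofReal (k x y)) (Set.univ : Set Y) Set.univ ∧
    chebMDual (fun x y => ENNReal.ofReal (k x y)) (Set.univ : Set Y) Set.univ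
        = qUp (fun x y => ENNReal.ofReal (k x y)) (Set.univ : Set Y) Set.univ := by
  obtain ⟨C₀, hC₀⟩ := hbdd
  set C : ℝ := max C₀ 1 with hCdef
  have hC : 0 < C := lt_of_lt_of_le one_pos (le_max_right _ _)
  have hkC : ∀ x y : Y, k x y ≤ C := fun x y => (hC₀ x y).trans (le_max_left _ _)
  have hk0 : ∀ x y : Y, 0 ≤ k x y := fun x y => (hpos x y).le
  set k' : Y → Y → ℝ≥0∞ := fun x y => ENNReal.ofReal (k x y) with hk'
  have hk'symm : ∀ x y : Y, k' x y = k' y x := fun x y => congrArg ENNReal.ofReal (hsymm x y)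
  have hk'C : ∀ x y : Y, k' x y ≤ ENNReal.ofReal C :=
    fun x y => ENNReal.ofReal_le_ofReal (hkC x y)
  have hcont : ∀ x : Y, Continuous fun z => k x z := by
    intro x
    rw [Metric.continuous_iff]
    intro b ε' hε'
    obtain ⟨δ, hδ, hδ'⟩ := hequi ε' hε'
    exact ⟨δ, hδ, fun a ha => by
      rw [Real.dist_eq, hsymm x a, hsymm x b]; exact hδ' a b x ha⟩
  have hmeas : ∀ x : Y, Measurable fun z => k' x z := fun x =>
    ENNReal.measurable_ofReal.comp (hcont x).measurable
  haveI : Nonempty (Set.univ : Set Y) := ⟨⟨Classical.arbitrary Y, trivial⟩⟩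
  -- chebM ≤ qLow
  have hMq : chebM k' Set.univ Set.univ ≤ qLow k' Set.univ Set.univ := by
    rw [chebM]
    refine iSup_le fun n => iSup_le fun hn => ?_
    rw [chebMn]
    refine iSup_le fun w => ?_
    have htight := empMeasure_tight hn (fun j => (w j : Y))
    calc ⨅ x : (Set.univ : Set Y), (∑ j, k' (x : Y) ((w j : Y))) / (n : ℝ≥0∞)
        = ⨅ x : (Set.univ : Set Y), pot k' (empMeasure fun j => (w j : Y)) (x : Y) :=
          iInf_congr fun x => (pot_empMeasure k' hmeas _ _).symm
      _ ≤ qLow k' Set.univ Set.univ := by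
          rw [qLow]
          exact le_iSup₂ (f := fun (μ : Measure Y) (_ : TightProbOn μ Set.univ) =>
            ⨅ x : (Set.univ : Set Y), pot k' μ (x : Y)) _ htight
  -- qLow ≤ chebM
  have hqM : qLow k' Set.univ Set.univ ≤ chebM k' Set.univ Set.univ := by
    rw [qLow]
    refine iSup_le fun μ => iSup_le fun hμ => ?_
    refine ENNReal.le_of_forall_pos_le_add fun ε' hε' _ => ?_
    have hε : (0:ℝ) < ((ε' : ℝ≥0) : ℝ) := by exact_mod_cast hε'
    obtain ⟨n, hn, w, hw⟩ := approx_lemma k hsymm hC hkC hk0 hequi μ hμ hε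
    have hofReal : ENNReal.ofReal ((ε' : ℝ≥0) : ℝ) = (ε' : ℝ≥0∞) := ENNReal.ofReal_coe_nnreal
    have step1 : (⨅ x : (Set.univ : Set Y), pot k' μ (x : Y))
        ≤ (⨅ x : (Set.univ : Set Y), (∑ j, k' (x : Y) (w j)) / (n : ℝ≥0∞)) + (ε' : ℝ≥0∞) := by
      rw [iInf_add]
      refine le_iInf fun x => ?_
      refine le_trans (iInf_le _ x) ?_
      rw [← hofReal]
      exact (hw (x : Y)).2
    refine step1.trans (add_le_add_left ?_ _)
    have step2 : (⨅ x : (Set.univ : Set Y), (∑ j, k' (x : Y) (w j)) / (n : ℝ≥0∞))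
        ≤ chebMn k' n Set.univ Set.univ := by
      rw [chebMn]
      exact le_iSup (fun w' : Fin n → (Set.univ : Set Y) =>
        ⨅ x : (Set.univ : Set Y), (∑ j, k' (x : Y) ((w' j : Y))) / (n : ℝ≥0∞))
        (fun j => ⟨w j, trivial⟩)
    refine step2.trans ?_
    rw [chebM]
    exact le_iSup₂ (f := fun (n : ℕ) (_ : 1 ≤ n) => chebMn k' n (Set.univ : Set Y) Set.univ) n hn
  -- qUp ≤ chebMDual
  have hqMd : qUp k' Set.univ Set.univ ≤ chebMDual k' Set.univ Set.univ := by
    rw [chebMDual]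
    refine le_iInf fun n => le_iInf fun hn => ?_
    rw [chebMnDual]
    refine le_iInf fun w => ?_
    have htight := empMeasure_tight hn (fun j => (w j : Y))
    calc qUp k' Set.univ Set.univ
        ≤ ⨆ x : (Set.univ : Set Y), pot k' (empMeasure fun j => (w j : Y)) (x : Y) := by
          rw [qUp]
          exact iInf₂_le (f := fun (μ : Measure Y) (_ : TightProbOn μ Set.univ) =>
            ⨆ x : (Set.univ : Set Y), pot k' μ (x : Y)) _ htight
      _ = ⨆ x : (Set.univ : Set Y), (∑ j, k' (x : Y) ((w j : Y))) / (n : ℝ≥0∞) :=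
          iSup_congr fun x => pot_empMeasure k' hmeas _ _
  -- chebMDual ≤ qUp
  have hMdq : chebMDual k' Set.univ Set.univ ≤ qUp k' Set.univ Set.univ := by
    rw [qUp]
    refine le_iInf fun μ => le_iInf fun hμ => ?_
    refine ENNReal.le_of_forall_pos_le_add fun ε' hε' _ => ?_
    have hε : (0:ℝ) < ((ε' : ℝ≥0) : ℝ) := by exact_mod_cast hε'
    obtain ⟨n, hn, w, hw⟩ := approx_lemma k hsymm hC hkC hk0 hequi μ hμ hε
    have hofReal : ENNReal.ofReal ((ε' : ℝ≥0) : ℝ) = (ε' : ℝ≥0∞) := ENNReal.ofReal_coe_nnreal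
    have step1 : chebMDual k' Set.univ Set.univ
        ≤ ⨆ x : (Set.univ : Set Y), (∑ j, k' (x : Y) (w j)) / (n : ℝ≥0∞) := by
      rw [chebMDual]
      refine le_trans (iInf₂_le (f := fun (n : ℕ) (_ : 1 ≤ n) =>
        chebMnDual k' n (Set.univ : Set Y) Set.univ) n hn) ?_
      rw [chebMnDual]
      exact iInf_le (fun w' : Fin n → (Set.univ : Set Y) =>
        ⨆ x : (Set.univ : Set Y), (∑ j, k' (x : Y) ((w' j : Y))) / (n : ℝ≥0∞))
        (fun j => ⟨w j, trivial⟩)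
    refine step1.trans ?_
    have step2 : (⨆ x : (Set.univ : Set Y), (∑ j, k' (x : Y) (w j)) / (n : ℝ≥0∞))
        ≤ (⨆ x : (Set.univ : Set Y), pot k' μ (x : Y)) + (ε' : ℝ≥0∞) := by
      rw [iSup_add]
      refine iSup_le fun x => ?_
      refine le_trans ?_ (le_iSup (fun x : (Set.univ : Set Y) =>
        pot k' μ (x : Y) + (ε' : ℝ≥0∞)) x)
      rw [← hofReal]
      exact (hw (x : Y)).1
    exact step2
  -- chebM ≤ chebMDual
  have hMMd : chebM k' Set.univ Set.univ ≤ chebMDual k' Set.univ Set.univ := by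
    rw [chebM, chebMDual]
    refine iSup_le fun n => iSup_le fun hn => le_iInf fun m => le_iInf fun hm => ?_
    exact chebMn_le_dual k' hk'symm ENNReal.ofReal_ne_top hk'C hn hm
  exact ⟨le_antisymm hqM hMq, hMMd, le_antisymm hMdq hqMd⟩
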